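/- Let A₁, A₂ ∈ M_{p,q}(F) be linearly independent matrices over a field F. Then for every (g₁, g₂) ∈ F², there exist x ∈ F^q and y ∈ F^p with yᵀA₁x = g₁ and yᵀA₂x = g₂. -/

import Mathlib

open Matrix

private lemma solve2 {F : Type*} [Field F] (a₁ a₂ b₁ b₂ g₁ g₂ : F)
    (hD : a₁*b₂ - a₂*b₁ ≠ 0) :
    ∃ c d : F, c*a₁ + d*b₁ = g₁ ∧ c*a₂ + d*b₂ = g₂ := by
  refine ⟨(g₁*b₂ - g₂*b₁)/(a₁*b₂ - a₂*b₁), (a₁*g₂ - a₂*g₁)/(a₁*b₂ - a₂*b₁), ?_, ?_⟩ <;>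
    rw [div_mul_eq_mul_div, div_mul_eq_mul_div, ← add_div, div_eq_iff hD] <;> ring

private lemma expandBil {F : Type*} [Field F] {p q : ℕ} (A : Matrix (Fin p) (Fin q) F)
    (x x' : Fin q → F) (y y' : Fin p → F) (a b c d : F) :
    dotProduct (a•y + b•y') (A.mulVec (c•x + d•x')) =
      a*c*(dotProduct y (A.mulVec x)) + a*d*(dotProduct y (A.mulVec x'))
      + b*c*(dotProduct y' (A.mulVec x)) + b*d*(dotProduct y' (A.mulVec x')) := by
  simp [Matrix.mulVec_add, Matrix.mulVec_smul, dotProduct_add, add_dotProduct,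
    dotProduct_smul, smul_dotProduct, smul_eq_mul]
  ring

theorem stmt_1 {F : Type*} [Field F] {p q : ℕ}
    (A₁ A₂ : Matrix (Fin p) (Fin q) F) (h : LinearIndependent F ![A₁, A₂])
    (g₁ g₂ : F) :
    ∃ (x : Fin q → F) (y : Fin p → F),
      dotProduct y (A₁.mulVec x) = g₁ ∧ dotProduct y (A₂.mulVec x) = g₂ := by
  set f₁ : (Fin q → F) → (Fin p → F) → F := fun x y => dotProduct y (A₁.mulVec x) with hf₁
  set f₂ : (Fin q → F) → (Fin p → F) → F := fun x y => dotProduct y (A₂.mulVec x) with hf₂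
  -- nondegeneracy
  have nondeg : ∀ α β : F, (∀ x y, α * f₁ x y + β * f₂ x y = 0) → α = 0 ∧ β = 0 := by
    intro α β hαβ
    have hM : α • A₁ + β • A₂ = 0 := by
      ext i j
      have := hαβ (Pi.single j 1) (Pi.single i 1)
      simp only [hf₁, hf₂, Matrix.mulVec_single_one, single_dotProduct, Matrix.col_apply, one_mul] at this
      simp only [Matrix.add_apply, Matrix.smul_apply, Matrix.zero_apply, smul_eq_mul]
      linear_combination this
    exact LinearIndependent.pair_iff.mp h α β hM
  -- existence of a pair with nonzero determinant
  have hex : ∃ x y x' y', f₁ x y * f₂ x' y' - f₂ x y * f₁ x' y' ≠ 0 := by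
    by_contra hc
    push_neg at hc
    have hnz : ∃ x y, ¬(f₁ x y = 0 ∧ f₂ x y = 0) := by
      by_contra hz
      push_neg at hz
      have := nondeg 1 0 (fun x y => by simp [(hz x y).1])
      exact one_ne_zero this.1
    obtain ⟨x₀, y₀, hu⟩ := hnz
    have := nondeg (-(f₂ x₀ y₀)) (f₁ x₀ y₀) (fun x y => by
      have := hc x₀ y₀ x y
      linear_combination this)
    exact hu ⟨this.2, by simpa using this.1⟩
  obtain ⟨x, y, x', y', hD⟩ := hex
  rcases eq_or_ne (f₁ x y * f₂ x y' - f₂ x y * f₁ x y') 0 with ha | ha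
  swap
  · -- u and w=f(x,y') independent : fix x, combine y, y'
    obtain ⟨c, d, h1, h2⟩ := solve2 _ _ _ _ g₁ g₂ ha
    simp only [hf₁, hf₂] at h1 h2
    refine ⟨(1:F)•x + (0:F)•x', c•y + d•y', ?_, ?_⟩
    · rw [expandBil]; linear_combination h1
    · rw [expandBil]; linear_combination h2
  rcases eq_or_ne (f₁ x y' * f₂ x' y' - f₂ x y' * f₁ x' y') 0 with hb | hb
  swap
  · -- w and u' independent : fix y', combine x, x'
    obtain ⟨c, d, h1, h2⟩ := solve2 _ _ _ _ g₁ g₂ hb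
    simp only [hf₁, hf₂] at h1 h2
    refine ⟨c•x + d•x', (0:F)•y + (1:F)•y', ?_, ?_⟩
    · rw [expandBil]; linear_combination h1
    · rw [expandBil]; linear_combination h2
  rcases eq_or_ne (f₁ x y * f₂ x' y - f₂ x y * f₁ x' y) 0 with hc | hc
  swap
  · -- u and w'=f(x',y) independent : fix y, combine x, x'
    obtain ⟨c, d, h1, h2⟩ := solve2 _ _ _ _ g₁ g₂ hc
    simp only [hf₁, hf₂] at h1 h2
    refine ⟨c•x + d•x', (1:F)•y + (0:F)•y', ?_, ?_⟩
    · rw [expandBil]; linear_combination h1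
    · rw [expandBil]; linear_combination h2
  rcases eq_or_ne (f₁ x' y * f₂ x' y' - f₂ x' y * f₁ x' y') 0 with hd | hd
  swap
  · -- w' and u' independent : fix x', combine y, y'
    obtain ⟨c, d, h1, h2⟩ := solve2 _ _ _ _ g₁ g₂ hd
    simp only [hf₁, hf₂] at h1 h2
    refine ⟨(0:F)•x + (1:F)•x', c•y + d•y', ?_, ?_⟩
    · rw [expandBil]; linear_combination h1
    · rw [expandBil]; linear_combination h2
  -- all cross determinants vanish: cross terms are zero
  have hw1 : f₁ x y' = 0 := by
    have h0 : (f₁ x y * f₂ x' y' - f₂ x y * f₁ x' y') * f₁ x y' = 0 := by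
      linear_combination f₁ x' y' * ha + f₁ x y * hb
    rcases mul_eq_zero.mp h0 with h' | h'
    · exact absurd h' hD
    · exact h'
  have hw2 : f₂ x y' = 0 := by
    have h0 : (f₁ x y * f₂ x' y' - f₂ x y * f₁ x' y') * f₂ x y' = 0 := by
      linear_combination f₂ x' y' * ha + f₂ x y * hb
    rcases mul_eq_zero.mp h0 with h' | h'
    · exact absurd h' hD
    · exact h'
  have hv1 : f₁ x' y = 0 := by
    have h0 : (f₁ x y * f₂ x' y' - f₂ x y * f₁ x' y') * f₁ x' y = 0 := by
      linear_combination f₁ x' y' * hc + f₁ x y * hd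
    rcases mul_eq_zero.mp h0 with h' | h'
    · exact absurd h' hD
    · exact h'
  have hv2 : f₂ x' y = 0 := by
    have h0 : (f₁ x y * f₂ x' y' - f₂ x y * f₁ x' y') * f₂ x' y = 0 := by
      linear_combination f₂ x' y' * hc + f₂ x y * hd
    rcases mul_eq_zero.mp h0 with h' | h'
    · exact absurd h' hD
    · exact h'
  -- cross terms vanish: use mixed combination
  obtain ⟨c, d, h1, h2⟩ := solve2 (f₁ x y) (f₂ x y) (f₁ x' y') (f₂ x' y') g₁ g₂ hD
  simp only [hf₁, hf₂] at h1 h2 hw1 hw2 hv1 hv2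
  refine ⟨c•x + (1:F)•x', (1:F)•y + d•y', ?_, ?_⟩
  · rw [expandBil]; linear_combination h1 + hv1 + (d*c) * hw1
  · rw [expandBil]; linear_combination h2 + hv2 + (d*c) * hw2
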